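/- Let G be a positive densely defined operator with inf{‖Gφ‖ : φ ∈ D(G), ‖φ‖=1} = 0 and let Pₙ be the spectral projections of G onto [0, Eₙ) for a discrete operator G with eigenvalues Eₖ ↗ ∞. Then for any state ρ with Tr Gρ ≤ E and Eₙ ≥ E, the normalized compression ρₙ = PₙρPₙ/Tr(Pₙρ) is a state with Tr Gρₙ ≤ E, and ρₙ → ρ in trace norm as n → ∞. -/

import Mathlib

open Filter
noncomputable section


lemma cs_tsum {u v : ℕ → ℝ} (hu : ∀ k, 0 ≤ u k) (hv : ∀ k, 0 ≤ v k)
    (hu2 : Summable (fun k => u k ^ 2)) (hv2 : Summable (fun k => v k ^ 2)) :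
    Summable (fun k => u k * v k) ∧
      ∑' k, u k * v k ≤ Real.sqrt (∑' k, u k ^ 2) * Real.sqrt (∑' k, v k ^ 2) := by
  have hsum : Summable (fun k => u k * v k) := by
    apply Summable.of_nonneg_of_le (fun k => mul_nonneg (hu k) (hv k))
      (fun k => ?_) ((hu2.add hv2).div_const 2)
    nlinarith [sq_nonneg (u k - v k)]
  refine ⟨hsum, Summable.tsum_le_of_sum_le hsum fun s => ?_⟩
  have h2 : (∑ k ∈ s, u k ^ 2) ≤ ∑' k, u k ^ 2 :=
    Summable.sum_le_tsum s (fun k _ => sq_nonneg _) hu2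
  have h3 : (∑ k ∈ s, v k ^ 2) ≤ ∑' k, v k ^ 2 :=
    Summable.sum_le_tsum s (fun k _ => sq_nonneg _) hv2
  have h1 : (∑ k ∈ s, u k * v k) ^ 2 ≤ (∑' k, u k ^ 2) * ∑' k, v k ^ 2 :=
    le_trans (Finset.sum_mul_sq_le_sq_mul_sq s u v)
      (mul_le_mul h2 h3 (Finset.sum_nonneg fun k _ => sq_nonneg _)
        ((Finset.sum_nonneg fun k _ => sq_nonneg _).trans h2))
  rw [← Real.sqrt_mul ((Finset.sum_nonneg (s := s) (fun k _ => sq_nonneg (u k))).trans h2)]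
  exact (Real.le_sqrt (Finset.sum_nonneg fun k _ => mul_nonneg (hu k) (hv k))
    (mul_nonneg (tsum_nonneg fun k => sq_nonneg _) (tsum_nonneg fun k => sq_nonneg _))).mpr h1

lemma ofReal_tsum_le {f : ℕ → ℝ} (hf : ∀ k, 0 ≤ f k) {c : ℝ} (hc : 0 ≤ c)
    (h : ∑' k, ENNReal.ofReal (f k) ≤ ENNReal.ofReal c) :
    Summable f ∧ ∑' k, f k ≤ c := by
  have hne : ∑' k, ENNReal.ofReal (f k) ≠ ⊤ :=
    (h.trans_lt ENNReal.ofReal_lt_top).ne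
  have hs : Summable f := by
    have := ENNReal.summable_toReal hne
    exact this.congr fun k => ENNReal.toReal_ofReal (hf k)
  refine ⟨hs, ?_⟩
  rw [← ENNReal.ofReal_tsum_of_nonneg hf hs] at h
  exact (ENNReal.ofReal_le_ofReal_iff hc).mp h

lemma cs_fin (s : Finset ℕ) {u v : ℕ → ℝ} (hu : ∀ k, 0 ≤ u k) (hv : ∀ k, 0 ≤ v k) :
    ∑ k ∈ s, u k * v k ≤ Real.sqrt (∑ k ∈ s, u k ^ 2) * Real.sqrt (∑ k ∈ s, v k ^ 2) := by
  rw [← Real.sqrt_mul (Finset.sum_nonneg fun k _ => sq_nonneg _)]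
  exact (Real.le_sqrt (Finset.sum_nonneg fun k _ => mul_nonneg (hu k) (hv k))
    (mul_nonneg (Finset.sum_nonneg fun k _ => sq_nonneg _)
      (Finset.sum_nonneg fun k _ => sq_nonneg _))).mpr
    (Finset.sum_mul_sq_le_sq_mul_sq s u v)



lemma parseval_hasSum {H : Type*} [NormedAddCommGroup H] [InnerProductSpace ℂ H] [CompleteSpace H]
    (τ : HilbertBasis ℕ ℂ H) (z : H) :
    HasSum (fun j => ‖(inner ℂ (τ j) z : ℂ)‖ ^ 2) (‖z‖ ^ 2) := by
  have h2 := (τ.hasSum_inner_mul_inner z z).mapL Complex.reCLM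
  have e1 : (fun i => Complex.reCLM ((inner ℂ z (τ i) : ℂ) * (inner ℂ (τ i) z : ℂ)))
      = fun i => ‖(inner ℂ (τ i) z : ℂ)‖ ^ 2 := by
    funext i
    simp only [Complex.reCLM_apply, ← inner_conj_symm (τ i) z, Complex.mul_conj,
      Complex.ofReal_re, Complex.normSq_conj]
    simp only [Complex.normSq_eq_norm_sq, Complex.norm_conj]
    try rw [norm_inner_symm]
  have e2 : Complex.reCLM (inner ℂ z z : ℂ) = ‖z‖ ^ 2 := by
    simpa using inner_self_eq_norm_sq (𝕜 := ℂ) z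
  rw [e1, e2] at h2
  exact h2

lemma parseval_ennreal {H : Type*} [NormedAddCommGroup H] [InnerProductSpace ℂ H] [CompleteSpace H]
    (τ : HilbertBasis ℕ ℂ H) (z : H) :
    ∑' j, ENNReal.ofReal (‖(inner ℂ (τ j) z : ℂ)‖ ^ 2) = ENNReal.ofReal (‖z‖ ^ 2) := by
  rw [← ENNReal.ofReal_tsum_of_nonneg (fun j => by positivity)
    (parseval_hasSum τ z).summable, (parseval_hasSum τ z).tsum_eq]

lemma tsum_sq_swap {H : Type*} [NormedAddCommGroup H] [InnerProductSpace ℂ H] [CompleteSpace H]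
    (τ : HilbertBasis ℕ ℂ H) (C D : H →L[ℂ] H)
    (h : ∀ j k, ‖(inner ℂ (τ j) (C (τ k)) : ℂ)‖ = ‖(inner ℂ (τ k) (D (τ j)) : ℂ)‖) :
    ∑' k, ENNReal.ofReal (‖C (τ k)‖ ^ 2) = ∑' j, ENNReal.ofReal (‖D (τ j)‖ ^ 2) :=
  calc ∑' k, ENNReal.ofReal (‖C (τ k)‖ ^ 2)
      = ∑' k, ∑' j, ENNReal.ofReal (‖(inner ℂ (τ j) (C (τ k)) : ℂ)‖ ^ 2) :=
        tsum_congr fun k => (parseval_ennreal τ _).symm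
    _ = ∑' j, ∑' k, ENNReal.ofReal (‖(inner ℂ (τ j) (C (τ k)) : ℂ)‖ ^ 2) := ENNReal.tsum_comm
    _ = ∑' j, ∑' k, ENNReal.ofReal (‖(inner ℂ (τ k) (D (τ j)) : ℂ)‖ ^ 2) :=
        tsum_congr fun j => tsum_congr fun k => by rw [h]
    _ = _ := tsum_congr fun j => parseval_ennreal τ _


set_option maxHeartbeats 2000000 in
set_option synthInstance.maxHeartbeats 1000000 in
/-- let `G = Σₖ Eₖ|τₖ⟩⟨τₖ|` be a discrete positive operator
(`Eₖ ↗ ∞`, `inf‖Gφ‖ = 0` on unit vectors is automatic for such spectra), and `Pₙ` the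
spectral projection onto `span{τ₀,…,τ_{n−1}}`.  For any state `ρ` with `Tr Gρ ≤ E`
and any `n` with `Eₙ ≥ E` (and `Tr Pₙρ > 0`, so that the compression is defined),
the normalized compression `ρₙ = PₙρPₙ/Tr(Pₙρ)` is a state with `Tr Gρₙ ≤ E`, and
`ρₙ → ρ` in trace norm (expressed via `sup_{‖B‖≤1}|Tr((ρ−ρₙ)B)| → 0`); traces are
computed in the eigenbasis `τ`. -/
theorem compressed_states_approximation
    {H : Type*} [NormedAddCommGroup H] [InnerProductSpace ℂ H] [CompleteSpace H]
    (τ : HilbertBasis ℕ ℂ H) (Ek : ℕ → ℝ)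
    (hEnn : ∀ k, 0 ≤ Ek k) (hmono : Monotone Ek)
    (htop : Tendsto Ek atTop atTop)
    (ρ : H →L[ℂ] H) (hpos : ρ.IsPositive)
    (htr : ∑' k, (inner ℂ (τ k) (ρ (τ k)) : ℂ).re = 1)
    (E : ℝ)
    (hE : ∑' k, ENNReal.ofReal (Ek k * (inner ℂ (τ k) (ρ (τ k)) : ℂ).re)
      ≤ ENNReal.ofReal E)
    (P : ℕ → (H →L[ℂ] H))
    (hP : P = fun n => ∑ k ∈ Finset.range n, ((innerSL ℂ (τ k)).smulRight (τ k)))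
    (t : ℕ → ℝ)  -- `t n = Tr(Pₙρ)`
    (ht : t = fun n => ∑ k ∈ Finset.range n, (inner ℂ (τ k) (ρ (τ k)) : ℂ).re)
    (ρn : ℕ → (H →L[ℂ] H))
    (hρn : ρn = fun n => ((t n)⁻¹ : ℂ) • (P n ∘L ρ ∘L P n)) :
    (∀ n : ℕ, E ≤ Ek n → 0 < t n →
      ((ρn n).IsPositive ∧
        ∑' k, (inner ℂ (τ k) ((ρn n) (τ k)) : ℂ).re = 1 ∧
        ∑' k, ENNReal.ofReal (Ek k * (inner ℂ (τ k) ((ρn n) (τ k)) : ℂ).re)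
          ≤ ENNReal.ofReal E)) ∧
    Tendsto (fun n => sSup {r : ℝ | ∃ B : H →L[ℂ] H, ‖B‖ ≤ 1 ∧
        r = ‖∑' k, (inner ℂ (τ k) (((ρ - ρn n) ∘L B) (τ k)) : ℂ)‖})
      atTop (nhds 0) := by
  -- basic abbreviations
  set a : ℕ → ℝ := fun k => (inner ℂ (τ k) (ρ (τ k)) : ℂ).re with ha
  -- P applied to basis vectors
  have hPt : ∀ n k, P n (τ k) = if k < n then τ k else 0 := by
    intro n k
    rw [hP]
    simp only [ContinuousLinearMap.sum_apply, ContinuousLinearMap.smulRight_apply,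
      innerSL_apply_apply]
    have horth := τ.orthonormal
    rw [orthonormal_iff_ite] at horth
    simp_rw [horth]
    simp [Finset.sum_ite_eq' (Finset.range n) k (fun j => τ j), Finset.mem_range]
  -- P is symmetric
  have hPinner : ∀ n (x y : H), (inner ℂ (P n x) y : ℂ) = inner ℂ x (P n y) := by
    intro n x y
    rw [hP]
    simp only [ContinuousLinearMap.sum_apply, ContinuousLinearMap.smulRight_apply,
      innerSL_apply_apply, sum_inner, inner_sum, inner_smul_left, inner_smul_right]
    refine Finset.sum_congr rfl fun j _ => ?_
    rw [inner_conj_symm]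
    ring
  -- ρ is symmetric
  have hρsym : ∀ (x y : H), (inner ℂ (ρ x) y : ℂ) = inner ℂ x (ρ y) :=
    ContinuousLinearMap.isSelfAdjoint_iff_isSymmetric.mp hpos.isSelfAdjoint
  -- nonnegativity of the diagonal entries
  have ha_nonneg : ∀ k, 0 ≤ a k := by
    intro k
    have h := hpos.inner_nonneg_right (τ k)
    simpa [ha, RCLike.re_to_complex] using (Complex.nonneg_iff.mp h).1
  -- summability of a
  have hsum_a : Summable a := by
    by_contra hns
    rw [tsum_eq_zero_of_not_summable hns] at htr
    norm_num at htr
  have ht_sum : ∀ n, t n = ∑ k ∈ Finset.range n, a k := fun n => by rw [ht]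
  have htn_le_one : ∀ n, t n ≤ 1 := by
    intro n
    rw [ht_sum, ← htr]
    exact Summable.sum_le_tsum _ (fun k _ => ha_nonneg k) hsum_a
  -- the diagonal entries of ρn
  have hdiag : ∀ n k, (inner ℂ (τ k) ((ρn n) (τ k)) : ℂ).re
      = if k < n then (t n)⁻¹ * a k else 0 := by
    intro n k
    rw [hρn]
    simp only [ContinuousLinearMap.smul_apply, ContinuousLinearMap.coe_comp',
      Function.comp_apply]
    by_cases hk : k < n
    · rw [hPt n k, if_pos hk, inner_smul_right, ← hPinner n (τ k) (ρ (τ k)),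
        hPt n k, if_pos hk, if_pos hk, ← Complex.ofReal_inv, Complex.re_ofReal_mul]
    · rw [hPt n k, if_neg hk, if_neg hk]
      simp
  constructor
  · -- part 1
    intro n hEkn htn
    have htninv : (0:ℝ) ≤ (t n)⁻¹ := inv_nonneg.mpr htn.le
    refine ⟨⟨?_, ?_⟩, ?_, ?_⟩
    · -- self-adjoint
      intro x y
      show (inner ℂ ((ρn n) x) y : ℂ) = inner ℂ x ((ρn n) y)
      rw [hρn]
      simp only [ContinuousLinearMap.smul_apply, ContinuousLinearMap.coe_comp',
        Function.comp_apply, inner_smul_left, inner_smul_right]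
      rw [hPinner, hρsym, hPinner]
      congr 1
      rw [map_inv₀, Complex.conj_ofReal]
    · -- positivity
      intro x
      show (0:ℝ) ≤ RCLike.re (inner ℂ ((ρn n) x) x : ℂ)
      rw [hρn]
      simp only [ContinuousLinearMap.smul_apply, ContinuousLinearMap.coe_comp',
        Function.comp_apply, inner_smul_left]
      rw [hPinner n _ x, hρsym]
      rw [map_inv₀, Complex.conj_ofReal, ← Complex.ofReal_inv]
      rw [RCLike.re_to_complex, Complex.re_ofReal_mul]
      exact mul_nonneg htninv (by
        have := hpos.inner_nonneg_right (P n x)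
        simpa [RCLike.re_to_complex] using (Complex.nonneg_iff.mp this).1)
    · -- trace one
      rw [tsum_eq_sum (s := Finset.range n)
        (by intro k hk; rw [hdiag, if_neg (by simpa using hk)])]
      have : ∀ k ∈ Finset.range n, (inner ℂ (τ k) ((ρn n) (τ k)) : ℂ).re
          = (t n)⁻¹ * a k := by
        intro k hk
        rw [hdiag, if_pos (Finset.mem_range.mp hk)]
      rw [Finset.sum_congr rfl this, ← Finset.mul_sum, ← ht_sum]
      exact inv_mul_cancel₀ htn.ne'
    · -- energy bound
      set E' := max E 0 with hE'
      have hofE : ENNReal.ofReal E = ENNReal.ofReal E' := by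
        rcases le_total 0 E with h | h
        · rw [hE', max_eq_left h]
        · rw [ENNReal.ofReal_of_nonpos h, hE', max_eq_right h, ENNReal.ofReal_zero]
      rw [hofE] at hE ⊢
      have hEa_nn : ∀ k, 0 ≤ Ek k * a k := fun k => mul_nonneg (hEnn k) (ha_nonneg k)
      obtain ⟨hsumEa, htotE⟩ := ofReal_tsum_le hEa_nn (le_max_right E 0) hE
      have hsplit_a := Summable.sum_add_tsum_nat_add (f := a) n hsum_a
      rw [htr] at hsplit_a
      have htail_a : ∑' i, a (i + n) = 1 - t n := by
        rw [ht_sum]; linarith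
      have hE'le : ∀ i, E' ≤ Ek (i + n) :=
        fun i => max_le (hEkn.trans (hmono (Nat.le_add_left n i))) (hEnn (i + n))
      have htail_E : E' * (1 - t n) ≤ ∑' i, Ek (i + n) * a (i + n) := by
        rw [← htail_a, ← tsum_mul_left]
        refine Summable.tsum_le_tsum (fun i => ?_)
          (((summable_nat_add_iff n).mpr hsum_a).mul_left E')
          ((summable_nat_add_iff n).mpr hsumEa)
        exact mul_le_mul_of_nonneg_right (hE'le i) (ha_nonneg _)
      have hsplit_E := Summable.sum_add_tsum_nat_add (f := fun k => Ek k * a k) n hsumEa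
      have hhead : ∑ k ∈ Finset.range n, Ek k * a k ≤ E' * t n := by
        have hr : E' - E' * (1 - t n) = E' * t n := by ring
        linarith [htail_E, htotE, hsplit_E]
      rw [tsum_eq_sum (s := Finset.range n) (by
        intro k hk
        rw [hdiag, if_neg (by simpa using hk), mul_zero, ENNReal.ofReal_zero])]
      have hterm : ∀ k ∈ Finset.range n,
          ENNReal.ofReal (Ek k * (inner ℂ (τ k) ((ρn n) (τ k)) : ℂ).re)
            = ENNReal.ofReal ((t n)⁻¹ * (Ek k * a k)) := by
        intro k hk
        rw [hdiag, if_pos (Finset.mem_range.mp hk)]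
        ring_nf
      rw [Finset.sum_congr rfl hterm,
        ← ENNReal.ofReal_sum_of_nonneg (fun k _ => mul_nonneg htninv (hEa_nn k)),
        ← Finset.mul_sum]
      refine ENNReal.ofReal_le_ofReal ?_
      calc (t n)⁻¹ * ∑ k ∈ Finset.range n, Ek k * a k
          ≤ (t n)⁻¹ * (E' * t n) := mul_le_mul_of_nonneg_left hhead htninv
        _ = E' := by field_simp
  · -- part 2
    classical
    -- square root of ρ
    have hρ0 : (0 : H →L[ℂ] H) ≤ ρ := (ContinuousLinearMap.nonneg_iff_isPositive ρ).mpr hpos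
    set S := CFC.sqrt ρ with hSdef
    have hS0 : (0 : H →L[ℂ] H) ≤ S := CFC.sqrt_nonneg ρ
    have hSpos : S.IsPositive := (ContinuousLinearMap.nonneg_iff_isPositive S).mp hS0
    have hSsym : ∀ x y : H, (inner ℂ (S x) y : ℂ) = inner ℂ x (S y) :=
      ContinuousLinearMap.isSelfAdjoint_iff_isSymmetric.mp hSpos.isSelfAdjoint
    have hSS : ∀ x, S (S x) = ρ x := by
      intro x
      have h : S * S = ρ := CFC.sqrt_mul_sqrt_self ρ hρ0
      calc S (S x) = (S * S) x := rfl
        _ = ρ x := by rw [h]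
    have hSnorm : ∀ x : H, ‖S x‖ ^ 2 = (inner ℂ x (ρ x) : ℂ).re := by
      intro x
      rw [← hSS x, ← hSsym]
      have h := inner_self_eq_norm_sq (𝕜 := ℂ) (S x)
      rw [← h]
      rfl
    have hua : ∀ k, ‖S (τ k)‖ ^ 2 = a k := fun k => hSnorm (τ k)
    -- total: ∑' ofReal (a k) = ofReal 1
    have hofa : ∑' k, ENNReal.ofReal (a k) = ENNReal.ofReal 1 := by
      rw [← ENNReal.ofReal_tsum_of_nonneg ha_nonneg hsum_a, htr]
    -- convergence of t to 1
    have htt : Tendsto t atTop (nhds 1) := by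
      have h := hsum_a.hasSum.tendsto_sum_nat
      rw [htr] at h
      have : (fun n => ∑ i ∈ Finset.range n, a i) = t := by
        funext n; rw [ht_sum]
      rwa [this] at h
    have h1t : Tendsto (fun n => 1 - t n) atTop (nhds 0) := by
      simpa using (tendsto_const_nhds (x := (1:ℝ))).sub htt
    have hst : Tendsto (fun n => Real.sqrt (1 - t n)) atTop (nhds 0) := by
      have := (Real.continuous_sqrt.tendsto 0).comp h1t
      simpa [Real.sqrt_zero, Function.comp_def] using this
    set cb : ℕ → ℝ := fun n => 3 * Real.sqrt (1 - t n) + 2 * (1 - t n) with hcb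
    have hcbt : Tendsto cb atTop (nhds 0) := by
      have := (hst.const_mul 3).add (h1t.const_mul 2)
      simpa using this
    have hev : ∀ᶠ n in atTop, 1 / 2 < t n :=
      htt.eventually (eventually_gt_nhds (by norm_num : (1:ℝ)/2 < 1))
    -- the uniform bound for each good n
    have key : ∀ n, 1 / 2 < t n →
        (0 ≤ sSup {r : ℝ | ∃ B : H →L[ℂ] H, ‖B‖ ≤ 1 ∧
          r = ‖∑' k, (inner ℂ (τ k) (((ρ - ρn n) ∘L B) (τ k)) : ℂ)‖} ∧
        sSup {r : ℝ | ∃ B : H →L[ℂ] H, ‖B‖ ≤ 1 ∧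
          r = ‖∑' k, (inner ℂ (τ k) (((ρ - ρn n) ∘L B) (τ k)) : ℂ)‖} ≤ cb n) := by
      intro n htn2
      have htn : 0 < t n := lt_trans (by norm_num) htn2
      have htn1 : t n ≤ 1 := htn_le_one n
      have h1tnn : 0 ≤ 1 - t n := by linarith
      have hcbnn : 0 ≤ cb n := by
        have := Real.sqrt_nonneg (1 - t n)
        rw [hcb]; dsimp only; linarith
      -- Q projection
      set Qn : H →L[ℂ] H := ContinuousLinearMap.id ℂ H - P n with hQdef
      have hQapp : ∀ z, Qn z = z - P n z := fun z => rfl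
      have hQt : ∀ k, Qn (τ k) = if k < n then 0 else τ k := by
        intro k
        rw [hQapp, hPt n k]
        by_cases hk : k < n <;> simp [hk]
      have hQinner : ∀ x y : H, (inner ℂ (Qn x) y : ℂ) = inner ℂ x (Qn y) := by
        intro x y
        rw [hQapp, hQapp, inner_sub_left, inner_sub_right, hPinner]
      -- tail of a
      have hsplit_a := Summable.sum_add_tsum_nat_add (f := a) n hsum_a
      rw [htr] at hsplit_a
      have htail_a : ∑' i, a (i + n) = 1 - t n := by rw [ht_sum]; linarith
      -- ∑' ofReal ‖S (Qn τ j)‖² ≤ ofReal (1 - t n)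
      have hQS : ∑' j, ENNReal.ofReal (‖S (Qn (τ j))‖ ^ 2) = ENNReal.ofReal (1 - t n) := by
        have hterm : ∀ j, ENNReal.ofReal (‖S (Qn (τ j))‖ ^ 2)
            = (if j < n then 0 else ENNReal.ofReal (a j)) := by
          intro j
          rw [hQt j]
          by_cases hj : j < n <;> simp [hj, hua j]
        rw [tsum_congr hterm]
        have hsplit : ∑' j, ((if j < n then 0 else ENNReal.ofReal (a j))
              + (if j < n then ENNReal.ofReal (a j) else 0)) = ENNReal.ofReal 1 := by
          rw [← hofa]
          refine tsum_congr fun j => ?_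
          by_cases hj : j < n <;> simp [hj]
        rw [ENNReal.tsum_add] at hsplit
        have hhead : ∑' j, (if j < n then ENNReal.ofReal (a j) else 0)
            = ENNReal.ofReal (t n) := by
          rw [tsum_eq_sum (s := Finset.range n) (by
            intro j hj
            rw [if_neg (by simpa using hj)])]
          rw [Finset.sum_congr rfl (fun j hj => if_pos (Finset.mem_range.mp hj)),
            ← ENNReal.ofReal_sum_of_nonneg (fun j _ => ha_nonneg j), ← ht_sum]
        rw [hhead] at hsplit
        have := ENNReal.eq_sub_of_add_eq (by simp) hsplit
        rw [this, ← ENNReal.ofReal_sub 1 htn.le]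
      -- swap-based bounds per B
      have hub : ∀ r ∈ {r : ℝ | ∃ B : H →L[ℂ] H, ‖B‖ ≤ 1 ∧
          r = ‖∑' k, (inner ℂ (τ k) (((ρ - ρn n) ∘L B) (τ k)) : ℂ)‖}, r ≤ cb n := by
        rintro r ⟨B, hB, rfl⟩
        by_cases hg : Summable (fun k => (inner ℂ (τ k) (((ρ - ρn n) ∘L B) (τ k)) : ℂ))
        swap
        · rw [tsum_eq_zero_of_not_summable hg, norm_zero]; exact hcbnn
        have hadj : ‖ContinuousLinearMap.adjoint B‖ = ‖B‖ :=
          LinearIsometryEquiv.norm_map _ B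
        -- bound on ∑ ‖S B τk‖²
        have hvEN : ∑' k, ENNReal.ofReal (‖S (B (τ k))‖ ^ 2) ≤ ENNReal.ofReal 1 := by
          have hswap := tsum_sq_swap τ (S ∘L B) ((ContinuousLinearMap.adjoint B) ∘L S)
            (fun j k => by
              simp only [ContinuousLinearMap.comp_apply]
              rw [← hSsym (τ j) (B (τ k)), ← ContinuousLinearMap.adjoint_inner_left B,
                norm_inner_symm])
          simp only [ContinuousLinearMap.comp_apply] at hswap
          rw [hswap]
          calc ∑' j, ENNReal.ofReal (‖ContinuousLinearMap.adjoint B (S (τ j))‖ ^ 2)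
              ≤ ∑' j, ENNReal.ofReal (a j) := by
                refine ENNReal.tsum_le_tsum fun j => ENNReal.ofReal_le_ofReal ?_
                rw [← hua j]
                refine pow_le_pow_left₀ (norm_nonneg _) ?_ 2
                calc ‖ContinuousLinearMap.adjoint B (S (τ j))‖
                    ≤ ‖ContinuousLinearMap.adjoint B‖ * ‖S (τ j)‖ :=
                      ContinuousLinearMap.le_opNorm _ _
                  _ ≤ 1 * ‖S (τ j)‖ := by
                      rw [hadj]; exact mul_le_mul_of_nonneg_right hB (norm_nonneg _)
                  _ = ‖S (τ j)‖ := one_mul _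
            _ = ENNReal.ofReal 1 := hofa
        obtain ⟨hv2sum, hv2le⟩ := ofReal_tsum_le (f := fun k => ‖S (B (τ k))‖ ^ 2)
          (fun k => sq_nonneg _) zero_le_one hvEN
        -- bound on ∑ ‖S Qn B τk‖²
        have hQSswap : ∑' j, ENNReal.ofReal (‖Qn (S (τ j))‖ ^ 2)
            = ENNReal.ofReal (1 - t n) := by
          have hswap := tsum_sq_swap τ (Qn ∘L S) (S ∘L Qn)
            (fun j k => by
              simp only [ContinuousLinearMap.comp_apply]
              rw [← hQinner (τ j) (S (τ k)), ← hSsym (Qn (τ j)) (τ k), norm_inner_symm])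
          simp only [ContinuousLinearMap.comp_apply] at hswap
          rw [hswap, hQS]
        have hwEN : ∑' k, ENNReal.ofReal (‖S (Qn (B (τ k)))‖ ^ 2)
            ≤ ENNReal.ofReal (1 - t n) := by
          have hswap := tsum_sq_swap τ (S ∘L (Qn ∘L B))
            ((ContinuousLinearMap.adjoint B) ∘L (Qn ∘L S))
            (fun j k => by
              simp only [ContinuousLinearMap.comp_apply]
              rw [← hSsym (τ j) (Qn (B (τ k))), ← hQinner (S (τ j)) (B (τ k)),
                ← ContinuousLinearMap.adjoint_inner_left B, norm_inner_symm])
          simp only [ContinuousLinearMap.comp_apply] at hswap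
          rw [hswap]
          calc ∑' j, ENNReal.ofReal (‖ContinuousLinearMap.adjoint B (Qn (S (τ j)))‖ ^ 2)
              ≤ ∑' j, ENNReal.ofReal (‖Qn (S (τ j))‖ ^ 2) := by
                refine ENNReal.tsum_le_tsum fun j => ENNReal.ofReal_le_ofReal ?_
                refine pow_le_pow_left₀ (norm_nonneg _) ?_ 2
                calc ‖ContinuousLinearMap.adjoint B (Qn (S (τ j)))‖
                    ≤ ‖ContinuousLinearMap.adjoint B‖ * ‖Qn (S (τ j))‖ :=
                      ContinuousLinearMap.le_opNorm _ _
                  _ ≤ 1 * ‖Qn (S (τ j))‖ := by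
                      rw [hadj]; exact mul_le_mul_of_nonneg_right hB (norm_nonneg _)
                  _ = ‖Qn (S (τ j))‖ := one_mul _
            _ = ENNReal.ofReal (1 - t n) := hQSswap
        obtain ⟨hw2sum, hw2le⟩ := ofReal_tsum_le (f := fun k => ‖S (Qn (B (τ k)))‖ ^ 2)
          (fun k => sq_nonneg _) h1tnn hwEN
        have hsum_u2 : Summable (fun k => ‖S (τ k)‖ ^ 2) :=
          hsum_a.congr (fun k => (hua k).symm)
        -- pointwise bounds
        have hnorm_r : ∀ k, ‖(inner ℂ (τ k) (ρ (B (τ k))) : ℂ)‖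
            ≤ ‖S (τ k)‖ * ‖S (B (τ k))‖ := by
          intro k
          have e : (inner ℂ (τ k) (ρ (B (τ k))) : ℂ) = inner ℂ (S (τ k)) (S (B (τ k))) := by
            rw [hSsym (τ k) (S (B (τ k))), hSS]
          rw [e]; exact norm_inner_le_norm _ _
        have hnorm_m : ∀ k, ‖(inner ℂ (τ k) (ρ (Qn (B (τ k)))) : ℂ)‖
            ≤ ‖S (τ k)‖ * ‖S (Qn (B (τ k)))‖ := by
          intro k
          have e : (inner ℂ (τ k) (ρ (Qn (B (τ k)))) : ℂ)
              = inner ℂ (S (τ k)) (S (Qn (B (τ k)))) := by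
            rw [hSsym (τ k) (S (Qn (B (τ k)))), hSS]
          rw [e]; exact norm_inner_le_norm _ _
        -- decompose the trace
        set c : ℂ := (((t n) : ℂ))⁻¹ with hcdef
        have hgk : ∀ k, (inner ℂ (τ k) (((ρ - ρn n) ∘L B) (τ k)) : ℂ)
            = inner ℂ (τ k) (ρ (B (τ k)))
              - c * inner ℂ (τ k) (P n (ρ (P n (B (τ k))))) := by
          intro k
          rw [ContinuousLinearMap.comp_apply, ContinuousLinearMap.sub_apply,
            inner_sub_right, hρn]
          simp only [ContinuousLinearMap.smul_apply, ContinuousLinearMap.coe_comp',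
            Function.comp_apply, inner_smul_right]
          rfl
        have hq0 : ∀ k, ¬ k < n →
            (inner ℂ (τ k) (P n (ρ (P n (B (τ k))))) : ℂ) = 0 := by
          intro k hk
          rw [← hPinner n (τ k), hPt n k, if_neg hk, inner_zero_left]
        have hqsum : Summable (fun k => (inner ℂ (τ k) (P n (ρ (P n (B (τ k))))) : ℂ)) :=
          summable_of_ne_finset_zero (s := Finset.range n)
            (fun k hk => hq0 k (by simpa using hk))
        have hrsum : Summable (fun k => (inner ℂ (τ k) (ρ (B (τ k))) : ℂ)) := by
          have e : (fun k => (inner ℂ (τ k) (ρ (B (τ k))) : ℂ))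
              = fun k => (inner ℂ (τ k) (((ρ - ρn n) ∘L B) (τ k)) : ℂ)
                + c * inner ℂ (τ k) (P n (ρ (P n (B (τ k))))) := by
            funext k; rw [hgk k]; ring
          rw [e]; exact hg.add (hqsum.mul_left c)
        have htsum_g : ∑' k, (inner ℂ (τ k) (((ρ - ρn n) ∘L B) (τ k)) : ℂ)
            = ∑' k, (inner ℂ (τ k) (ρ (B (τ k))) : ℂ)
              - c * ∑' k, (inner ℂ (τ k) (P n (ρ (P n (B (τ k))))) : ℂ) := by
          rw [tsum_congr hgk, Summable.tsum_sub hrsum (hqsum.mul_left c), tsum_mul_left]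
        have hq_eq : ∑' k, (inner ℂ (τ k) (P n (ρ (P n (B (τ k))))) : ℂ)
            = (∑ k ∈ Finset.range n, (inner ℂ (τ k) (ρ (B (τ k))) : ℂ))
              - ∑ k ∈ Finset.range n, (inner ℂ (τ k) (ρ (Qn (B (τ k)))) : ℂ) := by
          rw [tsum_eq_sum (s := Finset.range n)
            (fun k hk => hq0 k (by simpa using hk)), ← Finset.sum_sub_distrib]
          refine Finset.sum_congr rfl fun k hk => ?_
          have hk' := Finset.mem_range.mp hk
          rw [← hPinner n (τ k), hPt n k, if_pos hk']
          have hPz : P n (B (τ k)) = B (τ k) - Qn (B (τ k)) := by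
            rw [hQapp, sub_sub_cancel]
          rw [hPz, map_sub, inner_sub_right]
        have hsplit_r := Summable.sum_add_tsum_nat_add
          (f := fun k => (inner ℂ (τ k) (ρ (B (τ k))) : ℂ)) n hrsum
        have hX : ∑' k, (inner ℂ (τ k) (((ρ - ρn n) ∘L B) (τ k)) : ℂ)
            = (∑' i, (inner ℂ (τ (i + n)) (ρ (B (τ (i + n)))) : ℂ))
              + (1 - c) * (∑ k ∈ Finset.range n, (inner ℂ (τ k) (ρ (B (τ k))) : ℂ))
              + c * (∑ k ∈ Finset.range n, (inner ℂ (τ k) (ρ (Qn (B (τ k)))) : ℂ)) := by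
          rw [htsum_g, hq_eq, ← hsplit_r]; ring
        -- bound the three pieces
        have hcs_tail := cs_tsum (u := fun i => ‖S (τ (i + n))‖)
          (v := fun i => ‖S (B (τ (i + n)))‖) (fun i => norm_nonneg _)
          (fun i => norm_nonneg _) ((summable_nat_add_iff n).mpr hsum_u2)
          ((summable_nat_add_iff n).mpr hv2sum)
        have htail_norm_sum : Summable
            (fun i => ‖(inner ℂ (τ (i + n)) (ρ (B (τ (i + n)))) : ℂ)‖) :=
          Summable.of_nonneg_of_le (fun i => norm_nonneg _)
            (fun i => hnorm_r (i + n)) hcs_tail.1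
        have hu2tail : ∑' i, ‖S (τ (i + n))‖ ^ 2 = 1 - t n := by
          rw [tsum_congr (fun i => hua (i + n))]; exact htail_a
        have hv2tail : ∑' i, ‖S (B (τ (i + n)))‖ ^ 2 ≤ 1 := by
          have h := Summable.sum_add_tsum_nat_add
            (f := fun k => ‖S (B (τ k))‖ ^ 2) n hv2sum
          have hh : (0:ℝ) ≤ ∑ i ∈ Finset.range n, ‖S (B (τ i))‖ ^ 2 :=
            Finset.sum_nonneg fun i _ => sq_nonneg _
          linarith
        have hb1 : ‖∑' i, (inner ℂ (τ (i + n)) (ρ (B (τ (i + n)))) : ℂ)‖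
            ≤ Real.sqrt (1 - t n) := by
          calc ‖∑' i, (inner ℂ (τ (i + n)) (ρ (B (τ (i + n)))) : ℂ)‖
              ≤ ∑' i, ‖(inner ℂ (τ (i + n)) (ρ (B (τ (i + n)))) : ℂ)‖ :=
                norm_tsum_le_tsum_norm htail_norm_sum
            _ ≤ ∑' i, ‖S (τ (i + n))‖ * ‖S (B (τ (i + n)))‖ :=
                Summable.tsum_le_tsum (fun i => hnorm_r (i + n)) htail_norm_sum hcs_tail.1
            _ ≤ Real.sqrt (∑' i, ‖S (τ (i + n))‖ ^ 2)
                * Real.sqrt (∑' i, ‖S (B (τ (i + n)))‖ ^ 2) := hcs_tail.2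
            _ ≤ Real.sqrt (1 - t n) * 1 := by
                rw [hu2tail]
                exact mul_le_mul_of_nonneg_left (Real.sqrt_le_one.mpr hv2tail)
                  (Real.sqrt_nonneg _)
            _ = Real.sqrt (1 - t n) := mul_one _
        have hu2head : ∑ k ∈ Finset.range n, ‖S (τ k)‖ ^ 2 ≤ 1 := by
          rw [Finset.sum_congr rfl (fun k _ => hua k), ← ht_sum]; exact htn1
        have hv2head : ∑ k ∈ Finset.range n, ‖S (B (τ k))‖ ^ 2 ≤ 1 :=
          le_trans (Summable.sum_le_tsum _ (fun k _ => sq_nonneg _) hv2sum) hv2le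
        have hw2head : ∑ k ∈ Finset.range n, ‖S (Qn (B (τ k)))‖ ^ 2 ≤ 1 - t n :=
          le_trans (Summable.sum_le_tsum _ (fun k _ => sq_nonneg _) hw2sum) hw2le
        have hb2 : ‖∑ k ∈ Finset.range n, (inner ℂ (τ k) (ρ (B (τ k))) : ℂ)‖ ≤ 1 := by
          calc ‖∑ k ∈ Finset.range n, (inner ℂ (τ k) (ρ (B (τ k))) : ℂ)‖
              ≤ ∑ k ∈ Finset.range n, ‖(inner ℂ (τ k) (ρ (B (τ k))) : ℂ)‖ :=
                norm_sum_le _ _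
            _ ≤ ∑ k ∈ Finset.range n, ‖S (τ k)‖ * ‖S (B (τ k))‖ :=
                Finset.sum_le_sum fun k _ => hnorm_r k
            _ ≤ Real.sqrt (∑ k ∈ Finset.range n, ‖S (τ k)‖ ^ 2)
                * Real.sqrt (∑ k ∈ Finset.range n, ‖S (B (τ k))‖ ^ 2) :=
                cs_fin _ (fun k => norm_nonneg _) (fun k => norm_nonneg _)
            _ ≤ 1 * 1 := mul_le_mul (Real.sqrt_le_one.mpr hu2head)
                (Real.sqrt_le_one.mpr hv2head) (Real.sqrt_nonneg _) zero_le_one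
            _ = 1 := one_mul _
        have hb3 : ‖∑ k ∈ Finset.range n, (inner ℂ (τ k) (ρ (Qn (B (τ k)))) : ℂ)‖
            ≤ Real.sqrt (1 - t n) := by
          calc ‖∑ k ∈ Finset.range n, (inner ℂ (τ k) (ρ (Qn (B (τ k)))) : ℂ)‖
              ≤ ∑ k ∈ Finset.range n, ‖(inner ℂ (τ k) (ρ (Qn (B (τ k)))) : ℂ)‖ :=
                norm_sum_le _ _
            _ ≤ ∑ k ∈ Finset.range n, ‖S (τ k)‖ * ‖S (Qn (B (τ k)))‖ :=
                Finset.sum_le_sum fun k _ => hnorm_m k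
            _ ≤ Real.sqrt (∑ k ∈ Finset.range n, ‖S (τ k)‖ ^ 2)
                * Real.sqrt (∑ k ∈ Finset.range n, ‖S (Qn (B (τ k)))‖ ^ 2) :=
                cs_fin _ (fun k => norm_nonneg _) (fun k => norm_nonneg _)
            _ ≤ 1 * Real.sqrt (1 - t n) := by
                refine mul_le_mul (Real.sqrt_le_one.mpr hu2head)
                  (Real.sqrt_le_sqrt hw2head) (Real.sqrt_nonneg _) zero_le_one
            _ = Real.sqrt (1 - t n) := one_mul _
        -- scalar norms
        have htninv2 : (t n)⁻¹ ≤ 2 := by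
          rw [show (2:ℝ) = ((1:ℝ)/2)⁻¹ by norm_num]
          exact inv_anti₀ (by norm_num) htn2.le
        have hcnorm : ‖c‖ ≤ 2 := by
          rw [hcdef, norm_inv, Complex.norm_real, Real.norm_eq_abs,
            abs_of_pos htn]
          exact htninv2
        have h1cnorm : ‖1 - c‖ ≤ 2 * (1 - t n) := by
          have e : (1 : ℂ) - c = (((1 - (t n)⁻¹ : ℝ)) : ℂ) := by
            rw [hcdef]; push_cast; ring
          rw [e, Complex.norm_real, Real.norm_eq_abs,
            abs_of_nonpos (by
              have : 1 ≤ (t n)⁻¹ := (one_le_inv₀ htn).mpr htn1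
              linarith)]
          have : (t n)⁻¹ - 1 = ((1 - t n)) * (t n)⁻¹ := by
            field_simp
          rw [neg_sub, this]
          calc (1 - t n) * (t n)⁻¹ ≤ (1 - t n) * 2 :=
              mul_le_mul_of_nonneg_left htninv2 h1tnn
            _ = 2 * (1 - t n) := mul_comm _ _
        -- assemble
        rw [hX]
        calc ‖(∑' i, (inner ℂ (τ (i + n)) (ρ (B (τ (i + n)))) : ℂ))
              + (1 - c) * (∑ k ∈ Finset.range n, (inner ℂ (τ k) (ρ (B (τ k))) : ℂ))
              + c * (∑ k ∈ Finset.range n, (inner ℂ (τ k) (ρ (Qn (B (τ k)))) : ℂ))‖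
            ≤ ‖(∑' i, (inner ℂ (τ (i + n)) (ρ (B (τ (i + n)))) : ℂ))
              + (1 - c) * (∑ k ∈ Finset.range n, (inner ℂ (τ k) (ρ (B (τ k))) : ℂ))‖
              + ‖c * (∑ k ∈ Finset.range n, (inner ℂ (τ k) (ρ (Qn (B (τ k)))) : ℂ))‖ :=
              norm_add_le _ _
          _ ≤ ‖(∑' i, (inner ℂ (τ (i + n)) (ρ (B (τ (i + n)))) : ℂ))‖
              + ‖(1 - c) * (∑ k ∈ Finset.range n, (inner ℂ (τ k) (ρ (B (τ k))) : ℂ))‖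
              + ‖c * (∑ k ∈ Finset.range n, (inner ℂ (τ k) (ρ (Qn (B (τ k)))) : ℂ))‖ := by
              gcongr
              exact norm_add_le _ _
          _ ≤ Real.sqrt (1 - t n) + (2 * (1 - t n)) * 1
              + 2 * Real.sqrt (1 - t n) := by
              rw [norm_mul, norm_mul]
              exact add_le_add (add_le_add hb1
                (mul_le_mul h1cnorm hb2 (norm_nonneg _) (by positivity)))
                (mul_le_mul hcnorm hb3 (norm_nonneg _) zero_le_two)
          _ = cb n := by rw [hcb]; ring
      have h0mem : (0:ℝ) ∈ {r : ℝ | ∃ B : H →L[ℂ] H, ‖B‖ ≤ 1 ∧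
          r = ‖∑' k, (inner ℂ (τ k) (((ρ - ρn n) ∘L B) (τ k)) : ℂ)‖} := by
        refine ⟨0, by simp, ?_⟩
        simp
      exact ⟨le_csSup ⟨cb n, hub⟩ h0mem, Real.sSup_le hub hcbnn⟩
    refine tendsto_of_tendsto_of_tendsto_of_le_of_le'
      (tendsto_const_nhds (x := (0:ℝ))) hcbt ?_ ?_
    · exact hev.mono fun n hn => (key n hn).1
    · exact hev.mono fun n hn => (key n hn).2


end
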